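/- arXiv:1702.04763 — 3 statements merged into one kernel-verified Lean document; each statement's English description precedes it below -/
import Mathlib

section
/- With notation as in the standard Sierpiński carpet packing, the limit lim_{n→∞} N(3ⁿ/√2)/(3ⁿ/√2)^s equals √(2^s)/7 while lim_{n→∞} N(3ⁿ)/(3ⁿ)^s = 1/7, where s = log 8/log 3; consequently the limit lim_{x→∞} N(x)/x^s does not exist. -/
open Filter

/-! The packing of the standard Sierpiński carpet: the index `none` corresponds to `C₀`,
the boundary of the unit square, of Euclidean diameter `√2`; the index `some ⟨n, j⟩`
(with `j < 8 ^ n`) corresponds to the boundary of one of the `8 ^ n` open squares of side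
length `3 ^ (-(n+1))` removed at step `n + 1`, of Euclidean diameter `√2 · 3 ^ (-(n+1))`. -/

/-- Index set of the curves of the standard Sierpiński carpet packing. -/
def carpetIndex : Type := Option (Σ n : ℕ, Fin (8 ^ n))

/-- Euclidean diameter of the curve with the given index. -/
noncomputable def carpetDiam : carpetIndex → ℝ
  | none => Real.sqrt 2
  | some ⟨n, _⟩ => Real.sqrt 2 / 3 ^ (n + 1)

/-- The curvature distribution function `N(x) = #{k : (diam C_k)⁻¹ ≤ x}`. -/
noncomputable def carpetN (x : ℝ) : ℕ := Nat.card {i : carpetIndex // (carpetDiam i)⁻¹ ≤ x}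

def carpetEquiv (n : ℕ) (x : ℝ) (h0 : (carpetDiam none)⁻¹ ≤ x)
    (h : ∀ (k : ℕ) (j : Fin (8 ^ k)), ((carpetDiam (some ⟨k, j⟩))⁻¹ ≤ x ↔ k < n)) :
    {i : carpetIndex // (carpetDiam i)⁻¹ ≤ x} ≃ Option (Σ k : Fin n, Fin (8 ^ (k : ℕ))) where
  toFun i := match i with
    | ⟨none, _⟩ => none
    | ⟨some ⟨k, j⟩, hi⟩ => some ⟨⟨k, (h k j).1 hi⟩, j⟩
  invFun o := match o with
    | none => ⟨none, h0⟩
    | some ⟨⟨k, _hk⟩, j⟩ => ⟨some ⟨k, j⟩, (h k j).2 _hk⟩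
  left_inv := by rintro ⟨(_|⟨k,j⟩), hi⟩ <;> rfl
  right_inv := by rintro (_|⟨⟨k,hk⟩,j⟩) <;> rfl

lemma carpetN_eq (n : ℕ) (x : ℝ) (h0 : (carpetDiam none)⁻¹ ≤ x)
    (h : ∀ (k : ℕ) (j : Fin (8 ^ k)), ((carpetDiam (some ⟨k, j⟩))⁻¹ ≤ x ↔ k < n)) :
    carpetN x = 1 + ∑ k ∈ Finset.range n, 8 ^ k := by
  rw [carpetN, Nat.card_eq_of_equiv_fin ((carpetEquiv n x h0 h).trans (Fintype.equivFin _))]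
  simp [Fintype.card_option, Fintype.card_sigma, Fin.sum_univ_eq_sum_range, Nat.add_comm]

lemma sqrt2_pos : (0:ℝ) < Real.sqrt 2 := Real.sqrt_pos.2 (by norm_num)

lemma diam_some_inv (k : ℕ) (j : Fin (8 ^ k)) :
    (carpetDiam (some ⟨k, j⟩))⁻¹ = 3 ^ (k+1) / Real.sqrt 2 := by
  show (Real.sqrt 2 / 3 ^ (k+1))⁻¹ = _
  rw [inv_div]

lemma carpetN_pow_div (n : ℕ) :
    (carpetN ((3:ℝ) ^ n / Real.sqrt 2) : ℝ) = ((8:ℝ) ^ n + 6) / 7 := by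
  rw [carpetN_eq n]
  · push_cast
    rw [geom_sum_eq (by norm_num) n]
    ring
  · show (Real.sqrt 2)⁻¹ ≤ _
    rw [inv_eq_one_div, div_le_div_iff₀ sqrt2_pos sqrt2_pos]
    nlinarith [one_le_pow₀ (a := (3:ℝ)) (n := n) (by norm_num), sqrt2_pos]
  · intro k j
    rw [diam_some_inv, div_le_div_iff_of_pos_right sqrt2_pos,
      pow_le_pow_iff_right₀ (by norm_num : (1:ℝ) < 3)]
    omega

lemma carpetN_pow (n : ℕ) :
    (carpetN ((3:ℝ) ^ n) : ℝ) = ((8:ℝ) ^ n + 6) / 7 := by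
  rw [carpetN_eq n]
  · push_cast
    rw [geom_sum_eq (by norm_num) n]
    ring
  · show (Real.sqrt 2)⁻¹ ≤ _
    calc (Real.sqrt 2)⁻¹ ≤ 1 := by
          apply inv_le_one_of_one_le₀
          nlinarith [Real.sq_sqrt (by norm_num : (2:ℝ) ≥ 0), sqrt2_pos]
      _ ≤ 3 ^ n := one_le_pow₀ (by norm_num)
  · intro k j
    rw [diam_some_inv, div_le_iff₀ sqrt2_pos]
    have hs1 : (1:ℝ) ≤ Real.sqrt 2 := Real.one_le_sqrt.2 (by norm_num)
    have hs3 : Real.sqrt 2 < 3 := by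
      nlinarith [Real.sq_sqrt (by norm_num : (2:ℝ) ≥ 0), sqrt2_pos]
    constructor
    · intro hle
      by_contra hkn
      have : n + 1 ≤ k + 1 := by omega
      have : (3:ℝ) ^ (n+1) ≤ 3 ^ (k+1) := pow_le_pow_right₀ (by norm_num) this
      have h3 : (3:ℝ)^n * Real.sqrt 2 < 3^n * 3 := by
        have := pow_pos (by norm_num : (0:ℝ) < 3) n; nlinarith
      
      have : (3:ℝ)^(n+1) ≤ Real.sqrt 2 * 3^n := le_trans this (by linarith [hle, mul_comm (Real.sqrt 2) ((3:ℝ)^n)])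
      rw [pow_succ, mul_comm ((3:ℝ)^n)] at this
      linarith
    · intro hkn
      calc (3:ℝ) ^ (k+1) ≤ 3 ^ n := pow_le_pow_right₀ (by norm_num) (by omega)
        _ = 3^n * 1 := by ring
        _ ≤ 3^n * Real.sqrt 2 := by
            exact mul_le_mul_of_nonneg_left hs1 (by positivity)

local notation "s" => Real.log 8 / Real.log 3

lemma rpow3s : (3:ℝ) ^ (s) = 8 := by
  rw [Real.rpow_def_of_pos (by norm_num), mul_comm, div_mul_cancel₀ _
    (Real.log_ne_zero_of_pos_of_ne_one (by norm_num) (by norm_num)), Real.exp_log (by norm_num)]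

lemma pow3s (n : ℕ) : ((3:ℝ) ^ n) ^ (s) = 8 ^ n := by
  rw [← Real.rpow_natCast 3 n, ← Real.rpow_mul (by norm_num), mul_comm,
    Real.rpow_mul (by norm_num), rpow3s, Real.rpow_natCast]

lemma sqrt2s : (Real.sqrt 2) ^ (s) = Real.sqrt (2 ^ (s)) := by
  rw [Real.sqrt_eq_rpow, Real.sqrt_eq_rpow, ← Real.rpow_mul (by norm_num),
    ← Real.rpow_mul (by norm_num), mul_comm]

lemma s_pos : 0 < s :=
  div_pos (Real.log_pos (by norm_num)) (Real.log_pos (by norm_num))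

lemma two_rpow_s_gt : 1 < (2:ℝ) ^ (s) :=
  Real.one_lt_rpow_iff_of_pos (by norm_num) |>.2 (Or.inl ⟨by norm_num, s_pos⟩)

lemma tendsto_aux (c : ℝ) :
    Tendsto (fun n : ℕ => (((8:ℝ)^n + 6)/7) / ((8:ℝ)^n / c)) atTop (nhds (c / 7)) := by
  have h8 : ∀ n : ℕ, (0:ℝ) < 8 ^ n := fun n => by positivity
  have key : ∀ n : ℕ, (((8:ℝ)^n + 6)/7) / ((8:ℝ)^n / c) = c/7 * (1 + 6 * ((8:ℝ)⁻¹)^n) := by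
    intro n
    rw [div_div_eq_mul_div, inv_pow, mul_comm]
    field_simp
    try ring
  simp only [key]
  have := (tendsto_pow_atTop_nhds_zero_of_lt_one (by norm_num : (0:ℝ) ≤ 8⁻¹)
    (by norm_num)).const_mul (6:ℝ) |>.const_add (1:ℝ) |>.const_mul (c/7)
  simpa using this


/-- with `s = log 8 / log 3`,
`lim_{n→∞} N(3ⁿ/√2)/(3ⁿ/√2)^s = √(2^s)/7`, `lim_{n→∞} N(3ⁿ)/(3ⁿ)^s = 1/7`, and consequently
`lim_{x→∞} N(x)/x^s` does not exist. -/
theorem carpetN_limits :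
    (Tendsto
      (fun n : ℕ => (carpetN ((3 : ℝ) ^ n / Real.sqrt 2) : ℝ) /
        ((3 : ℝ) ^ n / Real.sqrt 2) ^ (Real.log 8 / Real.log 3))
      atTop (nhds (Real.sqrt (2 ^ (Real.log 8 / Real.log 3)) / 7))) ∧
    (Tendsto
      (fun n : ℕ => (carpetN ((3 : ℝ) ^ n) : ℝ) /
        ((3 : ℝ) ^ n) ^ (Real.log 8 / Real.log 3))
      atTop (nhds (1 / 7))) ∧
    ¬ ∃ L : ℝ, Tendsto
      (fun x : ℝ => (carpetN x : ℝ) / x ^ (Real.log 8 / Real.log 3)) atTop (nhds L) := by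

  have e1 : ∀ n : ℕ, ((3:ℝ)^n / Real.sqrt 2) ^ (s) = (8:ℝ)^n / Real.sqrt (2 ^ (s)) := by
    intro n
    rw [Real.div_rpow (by positivity) (Real.sqrt_nonneg 2), pow3s, sqrt2s]
  have t1 : Tendsto
      (fun n : ℕ => (carpetN ((3 : ℝ) ^ n / Real.sqrt 2) : ℝ) /
        ((3 : ℝ) ^ n / Real.sqrt 2) ^ (s))
      atTop (nhds (Real.sqrt (2 ^ (s)) / 7)) := by
    simp only [carpetN_pow_div, e1]
    exact tendsto_aux _
  have t2 : Tendsto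
      (fun n : ℕ => (carpetN ((3 : ℝ) ^ n) : ℝ) / ((3 : ℝ) ^ n) ^ (s))
      atTop (nhds (1 / 7)) := by
    have : ∀ n : ℕ, ((3:ℝ)^n) ^ (s) = (8:ℝ)^n / 1 := fun n => by rw [pow3s, div_one]
    simp only [carpetN_pow, this]
    exact tendsto_aux 1
  refine ⟨t1, t2, ?_⟩
  rintro ⟨L, hL⟩
  have h3 : Tendsto (fun n : ℕ => (3:ℝ)^n) atTop atTop :=
    tendsto_pow_atTop_atTop_of_one_lt (by norm_num)
  have hA : L = 1/7 := tendsto_nhds_unique (hL.comp h3) t2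
  have hB : L = Real.sqrt (2 ^ (s)) / 7 :=
    tendsto_nhds_unique (hL.comp (h3.atTop_div_const sqrt2_pos)) t1
  have hgt : (1:ℝ) < Real.sqrt (2 ^ (s)) := by
    nlinarith [Real.sq_sqrt (le_of_lt (lt_trans one_pos two_rpow_s_gt)),
      Real.sqrt_nonneg ((2:ℝ) ^ (s)), two_rpow_s_gt]
  rw [hA] at hB
  linarith
end

section
/- Let P : 𝔻 → 𝔻 be a proper holomorphic map of degree D with P(0) = 0, and fix r₀ ∈ (0,1). Then there exists r₁ > 0, depending only on D and r₀, such that B(0, r₁) ⊂ P(B(0, r₀)). -/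
open Metric Set Filter Topology

/-- Strip a list of zeros from a function via iterated `dslope`. -/
noncomputable def stripAll : List ℂ → (ℂ → ℂ) → ℂ → ℂ
  | [], f => f
  | a :: l, f => stripAll l (dslope f a)

lemma stripAll_differentiableOn (l : List ℂ) (f : ℂ → ℂ)
    (hl : ∀ a ∈ l, a ∈ ball (0:ℂ) 1)
    (hf : DifferentiableOn ℂ f (ball (0:ℂ) 1)) :
    DifferentiableOn ℂ (stripAll l f) (ball (0:ℂ) 1) := by
  induction l generalizing f with
  | nil => exact hf
  | cons a l ih =>
    exact ih _ (fun b hb => hl b (List.mem_cons_of_mem _ hb))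
      ((Complex.differentiableOn_dslope
        (isOpen_ball.mem_nhds (hl a (List.mem_cons_self)))).2 hf)

lemma stripAll_eq (l : List ℂ) (f : ℂ → ℂ) (hnd : l.Nodup)
    (hf0 : ∀ a ∈ l, f a = 0) {z : ℂ} (hz : z ∉ l) :
    stripAll l f z = f z / (l.map (fun a => z - a)).prod := by
  induction l generalizing f with
  | nil => simp [stripAll]
  | cons a l ih =>
    have hanl : a ∉ l := (List.nodup_cons.1 hnd).1
    have hzl : z ∉ l := fun h => hz (List.mem_cons_of_mem _ h)
    have hza : z ≠ a := fun h => hz (by rw [h]; exact List.mem_cons_self)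
    have h0 : ∀ b ∈ l, dslope f a b = 0 := by
      intro b hb
      have hba : b ≠ a := fun h => hanl (h ▸ hb)
      rw [dslope_of_ne f hba, slope_def_field, hf0 b (List.mem_cons_of_mem _ hb),
        hf0 a (List.mem_cons_self), sub_zero, zero_div]
    show stripAll l (dslope f a) z = _
    rw [ih (dslope f a) (List.nodup_cons.1 hnd).2 h0 hzl,
      dslope_of_ne f hza, slope_def_field, hf0 a (List.mem_cons_self), sub_zero,
      List.map_cons, List.prod_cons, div_div]

lemma norm_list_map_prod_le (l : List ℂ) (φ : ℂ → ℂ) {c : ℝ} (hc : 0 ≤ c)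
    (h : ∀ a ∈ l, ‖φ a‖ ≤ c) : ‖(l.map φ).prod‖ ≤ c ^ l.length := by
  induction l with
  | nil => simp
  | cons a l ih =>
    simp only [List.map_cons, List.prod_cons, List.length_cons, norm_mul, pow_succ]
    rw [mul_comm (c ^ l.length) c]
    exact mul_le_mul (h a (List.mem_cons_self))
      (ih fun b hb => h b (List.mem_cons_of_mem _ hb)) (norm_nonneg _) hc

lemma le_norm_list_map_prod (l : List ℂ) (φ : ℂ → ℂ) {c : ℝ} (hc : 0 ≤ c)
    (h : ∀ a ∈ l, c ≤ ‖φ a‖) : c ^ l.length ≤ ‖(l.map φ).prod‖ := by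
  induction l with
  | nil => simp
  | cons a l ih =>
    simp only [List.map_cons, List.prod_cons, List.length_cons, norm_mul, pow_succ]
    rw [mul_comm (c ^ l.length) c]
    exact mul_le_mul (h a (List.mem_cons_self))
      (ih fun b hb => h b (List.mem_cons_of_mem _ hb)) (pow_nonneg hc _)
      (norm_nonneg _)

lemma continuous_list_map_prod (l : List ℂ) :
    Continuous fun z : ℂ => (l.map fun a => z - a).prod := by
  induction l with
  | nil => simpa using continuous_const
  | cons a l ih =>
    simp only [List.map_cons, List.prod_cons]
    exact (continuous_id.sub continuous_const).mul ih

lemma list_map_prod_ne_zero (l : List ℂ) (z : ℂ) (h : ∀ a ∈ l, z ≠ a) :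
    (l.map fun a => z - a).prod ≠ 0 := by
  intro h0
  obtain ⟨a, ha, ha0⟩ := List.mem_map.1 (List.prod_eq_zero_iff.1 h0)
  exact h a ha (sub_eq_zero.1 ha0)

/-- for a proper holomorphic map `P : 𝔻 → 𝔻` of degree `D` with `P(0) = 0`
and any `r₀ ∈ (0,1)`, there exists `r₁ > 0` depending only on `D` and `r₀` with
`B(0,r₁) ⊆ P(B(0,r₀))`. -/
theorem proper_disk_image_contains_ball (D : ℕ) (hD : 1 ≤ D)
    (r₀ : ℝ) (hr₀0 : 0 < r₀) (hr₀1 : r₀ < 1) :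
    ∃ r₁ : ℝ, 0 < r₁ ∧ ∀ P : ℂ → ℂ,
      DifferentiableOn ℂ P (ball (0 : ℂ) 1) →
      MapsTo P (ball (0 : ℂ) 1) (ball (0 : ℂ) 1) →
      (∀ K ⊆ ball (0 : ℂ) 1, IsCompact K → IsCompact {z ∈ ball (0 : ℂ) 1 | P z ∈ K}) →
      (∀ w ∈ ball (0 : ℂ) 1, {z ∈ ball (0 : ℂ) 1 | P z = w}.Finite ∧
        1 ≤ {z ∈ ball (0 : ℂ) 1 | P z = w}.ncard ∧
        {z ∈ ball (0 : ℂ) 1 | P z = w}.ncard ≤ D) →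
      (∃ w ∈ ball (0 : ℂ) 1, {z ∈ ball (0 : ℂ) 1 | P z = w}.ncard = D) →
      P 0 = 0 →
      ball (0 : ℂ) r₁ ⊆ P '' ball (0 : ℂ) r₀ := by
  classical
  set ρ : ℝ := r₀ / 2 with hρ
  have hρ0 : 0 < ρ := by positivity
  have hρ1 : ρ < 1 := by rw [hρ]; linarith
  refine ⟨min (1/2) (ρ ^ D / 2 ^ (D + 3)), by positivity, ?_⟩
  set r₁ : ℝ := min (1/2) (ρ ^ D / 2 ^ (D + 3)) with hr₁def
  have hr₁half : r₁ ≤ 1/2 := min_le_left _ _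
  have hr₁small : r₁ ≤ ρ ^ D / 2 ^ (D + 3) := min_le_right _ _
  have hr₁pos : 0 < r₁ := by positivity
  intro P hdiff hmaps hproper h4 _hdeg hP0
  have hPan : AnalyticOnNhd ℂ P (ball (0:ℂ) 1) := hdiff.analyticOnNhd isOpen_ball
  -- a point where `P` takes the value `1/2`
  have hhalfmem : (1/2 : ℂ) ∈ ball (0:ℂ) 1 := by
    simp only [mem_ball, dist_zero_right]
    norm_num
  obtain ⟨zh, hzhmem, hzhval⟩ : ∃ z ∈ ball (0:ℂ) 1, P z = 1/2 := by
    obtain ⟨hfin, h1, -⟩ := h4 (1/2 : ℂ) hhalfmem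
    obtain ⟨z, hz⟩ := Set.nonempty_of_ncard_ne_zero
      (s := {z ∈ ball (0:ℂ) 1 | P z = (1/2 : ℂ)}) (by omega)
    exact ⟨z, hz.1, hz.2⟩
  -- `P` is nonconstant: its derivative does not vanish identically
  have hconst : ¬ EqOn (deriv P) 0 (ball (0:ℂ) 1) := by
    intro hEq
    have hbound : ‖P zh - P 0‖ ≤ 0 * ‖zh - (0:ℂ)‖ := by
      refine (convex_ball (0:ℂ) 1).norm_image_sub_le_of_norm_hasFDerivWithin_le
        (f' := fun x => ContinuousLinearMap.smulRight (1 : ℂ →L[ℂ] ℂ) (deriv P x))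
        (fun x hx => ?_) (fun x hx => ?_) (mem_ball_self one_pos) hzhmem
      · exact ((hdiff.differentiableAt
          (isOpen_ball.mem_nhds hx)).hasDerivAt).hasFDerivAt.hasFDerivWithinAt
      · have hx0 : deriv P x = 0 := hEq hx
        simp [hx0]
    rw [zero_mul, hzhval, hP0, sub_zero] at hbound
    have : (1/2 : ℂ) = 0 := norm_le_zero_iff.1 hbound
    norm_num at this
  -- properness applied to the closed ball of radius 3/4
  have hKsub : closedBall (0:ℂ) (3/4) ⊆ ball (0:ℂ) 1 :=
    closedBall_subset_ball (by norm_num)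
  have hEcpt : IsCompact {z ∈ ball (0:ℂ) 1 | P z ∈ closedBall (0:ℂ) (3/4)} :=
    hproper _ hKsub (isCompact_closedBall _ _)
  set E : Set ℂ := {z ∈ ball (0:ℂ) 1 | P z ∈ closedBall (0:ℂ) (3/4)} with hEdef
  have h0E : (0:ℂ) ∈ E := ⟨mem_ball_self one_pos, by
    rw [hP0]; exact mem_closedBall_self (by norm_num)⟩
  obtain ⟨zm, hzmE, hzm⟩ := hEcpt.exists_isMaxOn ⟨0, h0E⟩ continuous_norm.continuousOn
  set τ : ℝ := ‖zm‖ with hτdef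
  have hτ0 : 0 ≤ τ := norm_nonneg _
  have hτ1 : τ < 1 := by
    have := hzmE.1
    rwa [mem_ball, dist_zero_right] at this
  have hEsub : ∀ z ∈ E, ‖z‖ ≤ τ := fun z hz => hzm hz
  set τ₂ : ℝ := (1 + τ) / 2 with hτ₂def
  have hττ₂ : τ < τ₂ := by rw [hτ₂def]; linarith
  have hτ₂1 : τ₂ < 1 := by rw [hτ₂def]; linarith
  have hτ₂0 : 0 < τ₂ := by rw [hτ₂def]; linarith
  -- finiteness of critical points in `closedBall 0 τ`
  have hZcfin : {z : ℂ | z ∈ closedBall (0:ℂ) τ ∧ deriv P z = 0}.Finite := by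
    by_contra hinf
    have hinf' : {z : ℂ | z ∈ closedBall (0:ℂ) τ ∧ deriv P z = 0}.Infinite := hinf
    obtain ⟨x, hxK, hacc⟩ := hinf'.exists_accPt_of_subset_isCompact
      (isCompact_closedBall (0:ℂ) τ) (fun z hz => hz.1)
    have hxball : x ∈ ball (0:ℂ) 1 := by
      rw [mem_ball, dist_zero_right]
      have := mem_closedBall_zero_iff.1 hxK
      linarith
    have hfreq : ∃ᶠ z in 𝓝[≠] x, deriv P z = 0 := by
      rw [accPt_iff_frequently] at hacc
      rw [frequently_nhdsWithin_iff]
      exact hacc.mono fun y hy => ⟨hy.2.2, Set.mem_compl_singleton_iff.2 hy.1⟩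
    exact hconst <| (hPan.deriv).eqOn_zero_of_preconnected_of_frequently_eq_zero
      (convex_ball (0:ℂ) 1).isPreconnected hxball hfreq
  set C : Set ℂ := P '' {z : ℂ | z ∈ closedBall (0:ℂ) τ ∧ deriv P z = 0} with hCdef
  have hCfin : C.Finite := hZcfin.image P
  -- THE KEY STEP: values of small norm outside the finite critical-value set
  -- are attained on `closedBall 0 ρ`.
  have key : ∀ w' : ℂ, ‖w'‖ < r₁ → w' ∉ C →
      ∃ z ∈ closedBall (0:ℂ) ρ, P z = w' := by
    intro w' hw' hw'C
    by_contra hno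
    push_neg at hno
    have hw'0 : w' ≠ 0 := by
      rintro rfl
      exact hno 0 (mem_closedBall_self hρ0.le) hP0
    have hw'half : ‖w'‖ < 1/2 := lt_of_lt_of_le hw' hr₁half
    have hw'ball : w' ∈ ball (0:ℂ) 1 := by
      rw [mem_ball, dist_zero_right]; linarith
    obtain ⟨hSfin, hS1, hSD⟩ := h4 w' hw'ball
    set l : List ℂ := hSfin.toFinset.toList with hldef
    have hnd : l.Nodup := Finset.nodup_toList _
    have hmeml : ∀ a, a ∈ l ↔ a ∈ ball (0:ℂ) 1 ∧ P a = w' := by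
      intro a
      rw [hldef, Finset.mem_toList, Set.Finite.mem_toFinset]
      exact Iff.rfl
    have hlen : l.length = {z ∈ ball (0 : ℂ) 1 | P z = w'}.ncard := by
      rw [hldef, Finset.length_toList, Set.ncard_eq_toFinset_card _ hSfin]
    have hlenD : l.length ≤ D := by rw [hlen]; exact hSD
    have hlball : ∀ a ∈ l, a ∈ ball (0:ℂ) 1 := fun a ha => ((hmeml a).1 ha).1
    have hlval : ∀ a ∈ l, P a = w' := fun a ha => ((hmeml a).1 ha).2
    have hlE : ∀ a ∈ l, ‖a‖ ≤ τ := by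
      intro a ha
      refine hEsub a ⟨hlball a ha, ?_⟩
      rw [hlval a ha, mem_closedBall, dist_zero_right]
      linarith
    have hlρ : ∀ a ∈ l, ρ ≤ ‖a‖ := by
      intro a ha
      by_contra hlt
      push_neg at hlt
      exact hno a (by rw [mem_closedBall, dist_zero_right]; linarith) (hlval a ha)
    have hlderiv : ∀ a ∈ l, deriv P a ≠ 0 := by
      intro a ha hda
      refine hw'C ⟨a, ⟨?_, hda⟩, hlval a ha⟩
      rw [mem_closedBall, dist_zero_right]
      exact hlE a ha
    set f : ℂ → ℂ := fun z => P z - w' with hfdef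
    have hfd : DifferentiableOn ℂ f (ball (0:ℂ) 1) := hdiff.sub_const w'
    have hf0 : ∀ a ∈ l, f a = 0 := fun a ha => by
      simp only [hfdef, hlval a ha, sub_self]
    set g : ℂ → ℂ := stripAll l f with hgdef
    have hgd : DifferentiableOn ℂ g (ball (0:ℂ) 1) :=
      stripAll_differentiableOn l f hlball hfd
    have hgeq : ∀ z, z ∉ l → g z = f z / (l.map fun a => z - a).prod :=
      fun z hz => stripAll_eq l f hnd hf0 hz
    -- `g` has no zeros on the unit ball
    have hgne : ∀ z ∈ ball (0:ℂ) 1, g z ≠ 0 := by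
      intro z hz
      by_cases hzl : z ∈ l
      · -- limit argument at the stripped zero
        have hperm : l.Perm (z :: l.erase z) := List.perm_cons_erase hzl
        have hzerase : ∀ a ∈ l.erase z, z ≠ a := by
          intro a ha h
          exact hnd.not_mem_erase (h ▸ ha)
        have hprod_ne : ((l.erase z).map fun a => z - a).prod ≠ 0 :=
          list_map_prod_ne_zero _ _ hzerase
        -- eventual equality near `z`
        have h1 : ∀ᶠ z' in 𝓝 z, z' ∉ l.erase z ∧ z' ∈ ball (0:ℂ) 1 := by
          have hcl : IsClosed {z' : ℂ | z' ∈ l.erase z} :=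
            (List.finite_toSet _).isClosed
        -- the complement is open and contains z
          have hop : IsOpen ({z' : ℂ | z' ∈ l.erase z}ᶜ ∩ ball (0:ℂ) 1) :=
            hcl.isOpen_compl.inter isOpen_ball
          have hmem : z ∈ {z' : ℂ | z' ∈ l.erase z}ᶜ ∩ ball (0:ℂ) 1 :=
            ⟨hnd.not_mem_erase, hz⟩
          filter_upwards [hop.mem_nhds hmem] with z' hz'
          exact ⟨hz'.1, hz'.2⟩
        have heq : g =ᶠ[𝓝[≠] z]
            (fun z' => (f z' / (z' - z)) * (((l.erase z).map fun a => z' - a).prod)⁻¹) := by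
          filter_upwards [eventually_nhdsWithin_of_eventually_nhds h1,
            self_mem_nhdsWithin] with z' h' hne
          have hz'z : z' ≠ z := hne
          have hz'l : z' ∉ l := by
            intro hmem
            exact h'.1 ((List.mem_erase_of_ne hz'z).2 hmem)
          rw [hgeq z' hz'l]
          have : (l.map fun a => z' - a).prod
              = (z' - z) * ((l.erase z).map fun a => z' - a).prod := by
            rw [(hperm.map fun a => z' - a).prod_eq]
            simp [List.prod_cons]
          rw [this, ← div_div, div_eq_mul_inv (f z' / (z' - z))]
        -- the limit of `g` along the punctured neighborhood
        have hfz0 : f z = 0 := hf0 z hzl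
        have hderivP : HasDerivAt P (deriv P z) z :=
          (hdiff.differentiableAt (isOpen_ball.mem_nhds hz)).hasDerivAt
        have hderivf : HasDerivAt f (deriv P z) z := by
          exact hderivP.sub_const w'
        have hslope : Tendsto (fun z' => f z' / (z' - z)) (𝓝[≠] z) (𝓝 (deriv P z)) := by
          have h := hasDerivAt_iff_tendsto_slope.1 hderivf
          refine h.congr' ?_
          filter_upwards [self_mem_nhdsWithin] with z' _
          rw [slope_def_field, hfz0, sub_zero]
        have hprodcont : Tendsto (fun z' : ℂ => (((l.erase z).map fun a => z' - a).prod)⁻¹)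
            (𝓝[≠] z) (𝓝 ((((l.erase z).map fun a => z - a).prod)⁻¹)) :=
          (((continuous_list_map_prod (l.erase z)).tendsto z).inv₀ hprod_ne).mono_left
            nhdsWithin_le_nhds
        have hL : Tendsto g (𝓝[≠] z)
            (𝓝 (deriv P z * (((l.erase z).map fun a => z - a).prod)⁻¹)) :=
          (hslope.mul hprodcont).congr' heq.symm
        have hgz : Tendsto g (𝓝[≠] z) (𝓝 (g z)) :=
          ((hgd.continuousOn.continuousAt (isOpen_ball.mem_nhds hz)).tendsto).mono_left
            nhdsWithin_le_nhds
        have hval : g z = deriv P z * (((l.erase z).map fun a => z - a).prod)⁻¹ :=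
          tendsto_nhds_unique hgz hL
        rw [hval]
        exact mul_ne_zero (hlderiv z hzl) (inv_ne_zero hprod_ne)
      · rw [hgeq z hzl]
        refine div_ne_zero ?_ ?_
        · simp only [hfdef, sub_ne_zero]
          intro hPz
          exact hzl ((hmeml z).2 ⟨hz, hPz⟩)
        · exact list_map_prod_ne_zero _ _ (fun a ha h => hzl (h ▸ ha))
    -- upper bound for `‖g 0‖`
    have h0l : (0:ℂ) ∉ l := fun h0 => hw'0 (by rw [← hlval 0 h0, hP0])
    have hg0val : g 0 = f 0 / (l.map fun a => (0:ℂ) - a).prod := hgeq 0 h0l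
    have hprod0_lb : ρ ^ D ≤ ‖(l.map fun a => (0:ℂ) - a).prod‖ := by
      have h1 : ρ ^ l.length ≤ ‖(l.map fun a => (0:ℂ) - a).prod‖ := by
        refine le_norm_list_map_prod l _ hρ0.le ?_
        intro a ha
        rw [zero_sub, norm_neg]
        exact hlρ a ha
      refine le_trans ?_ h1
      exact pow_le_pow_of_le_one hρ0.le hρ1.le hlenD
    have hg0_ub : ‖g 0‖ < 1 / 2 ^ (D + 3) := by
      have hρD : (0:ℝ) < ρ ^ D := by positivity
      have : ‖g 0‖ = ‖w'‖ / ‖(l.map fun a => (0:ℂ) - a).prod‖ := by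
        rw [hg0val, norm_div]
        congr 1
        simp only [hfdef, hP0, zero_sub, norm_neg]
      rw [this]
      calc ‖w'‖ / ‖(l.map fun a => (0:ℂ) - a).prod‖
          ≤ ‖w'‖ / ρ ^ D := by
            refine div_le_div₀ (norm_nonneg _) le_rfl hρD hprod0_lb
        _ < r₁ / ρ ^ D := by gcongr
        _ ≤ (ρ ^ D / 2 ^ (D + 3)) / ρ ^ D := by gcongr
        _ = 1 / 2 ^ (D + 3) := by
            field_simp
    -- lower bound for `‖g 0‖` via the minimum modulus principle on `ball 0 τ₂`
    have hginv_bound : ∀ z ∈ sphere (0:ℂ) τ₂, ‖(g z)⁻¹‖ ≤ 2 ^ D * 4 := by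
      intro z hzs
      have hznorm : ‖z‖ = τ₂ := by
        rw [← dist_zero_right]
        exact mem_sphere.1 hzs
      have hzball : z ∈ ball (0:ℂ) 1 := by
        rw [mem_ball, dist_zero_right, hznorm]; exact hτ₂1
      have hznl : z ∉ l := by
        intro hmem
        have := hlE z hmem
        rw [hznorm] at *
        linarith [hlE z hmem]
      have hzE : z ∉ E := by
        intro hmem
        have := hEsub z hmem
        rw [hznorm] at this
        linarith
      have hPz : 3/4 < ‖P z‖ := by
        by_contra hle
        push_neg at hle
        exact hzE ⟨hzball, by rw [mem_closedBall, dist_zero_right]; exact hle⟩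
      have hfz_lb : 1/4 ≤ ‖f z‖ := by
        have := norm_sub_norm_le (P z) w'
        simp only [hfdef]
        linarith
      have hprod_ub : ‖(l.map fun a => z - a).prod‖ ≤ 2 ^ D := by
        have h2 : ‖(l.map fun a => z - a).prod‖ ≤ (2:ℝ) ^ l.length := by
          refine norm_list_map_prod_le l _ (by norm_num) ?_
          intro a ha
          have h3 := norm_sub_le z a
          have h4 := hlE a ha
          rw [hznorm] at h3
          linarith
        refine h2.trans ?_
        exact pow_le_pow_right₀ one_le_two hlenD
      rw [hgeq z hznl, norm_inv, norm_div, inv_div]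
      calc ‖(l.map fun a => z - a).prod‖ / ‖f z‖
          ≤ 2 ^ D / (1/4) := div_le_div₀ (by positivity) hprod_ub (by norm_num) hfz_lb
        _ = 2 ^ D * 4 := by ring
    have hgmin : (2 ^ D * 4 : ℝ)⁻¹ ≤ ‖g 0‖ := by
      have hsub2 : ball (0:ℂ) τ₂ ⊆ ball (0:ℂ) 1 := ball_subset_ball hτ₂1.le
      have hsub3 : closedBall (0:ℂ) τ₂ ⊆ ball (0:ℂ) 1 := closedBall_subset_ball hτ₂1
      have hdc : DiffContOnCl ℂ (fun z => (g z)⁻¹) (ball (0:ℂ) τ₂) := by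
        constructor
        · exact ((hgd.mono hsub2).inv (fun z hz => hgne z (hsub2 hz)))
        · rw [closure_ball (0:ℂ) (ne_of_gt hτ₂0)]
          exact ((hgd.continuousOn.mono hsub3).inv₀ (fun z hz => hgne z (hsub3 hz)))
      have hfr : ∀ z ∈ frontier (ball (0:ℂ) τ₂), ‖(g z)⁻¹‖ ≤ 2 ^ D * 4 := by
        rw [frontier_ball (0:ℂ) (ne_of_gt hτ₂0)]
        exact hginv_bound
      have h0cl : (0:ℂ) ∈ closure (ball (0:ℂ) τ₂) :=
        subset_closure (mem_ball_self hτ₂0)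
      have := Complex.norm_le_of_forall_mem_frontier_norm_le isBounded_ball hdc hfr h0cl
      rw [norm_inv] at this
      have hg0pos : 0 < ‖g 0‖ := norm_pos_iff.2 (hgne 0 (mem_ball_self one_pos))
      have h1 : (1:ℝ) ≤ ‖g 0‖ * (2 ^ D * 4) := by
        have h2 := mul_le_mul_of_nonneg_right this hg0pos.le
        rw [inv_mul_cancel₀ hg0pos.ne'] at h2
        linarith [h2]
      have hpos : (0:ℝ) < 2 ^ D * 4 := by positivity
      rw [inv_eq_one_div, div_le_iff₀ hpos]
      linarith
    -- contradiction
    have h2D : (0:ℝ) < 2 ^ D := by positivity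
    have hlt : (2 ^ D * 4 : ℝ)⁻¹ < 1 / 2 ^ (D + 3) := lt_of_le_of_lt hgmin hg0_ub
    rw [pow_add, one_div] at hlt
    have h8 : ((2:ℝ) ^ 3) = 8 := by norm_num
    rw [h8] at hlt
    have hmono : ((2:ℝ) ^ D * 8)⁻¹ ≤ ((2:ℝ) ^ D * 4)⁻¹ := by
      rw [inv_eq_one_div, inv_eq_one_div]
      apply one_div_le_one_div_of_le (by positivity)
      nlinarith
    linarith
  -- CONCLUSION: every `w` in `ball 0 r₁` is attained on `ball 0 r₀`
  intro w hw
  rw [mem_ball, dist_zero_right] at hw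
  rcases eq_or_ne w 0 with rfl | hw0
  · exact ⟨0, mem_ball_self hr₀0, hP0⟩
  have hcbsub : closedBall (0:ℂ) ρ ⊆ ball (0:ℂ) r₀ := by
    refine closedBall_subset_ball ?_
    rw [hρ]; linarith
  have himgclosed : IsClosed (P '' closedBall (0:ℂ) ρ) :=
    ((isCompact_closedBall (0:ℂ) ρ).image_of_continuousOn
      (hdiff.continuousOn.mono (hcbsub.trans (ball_subset_ball hr₀1.le)))).isClosed
  have hwcl : w ∈ closure (P '' closedBall (0:ℂ) ρ) := by
    rw [Metric.mem_closure_iff]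
    intro ε hε
    set δ : ℝ := min 1 (ε / (‖w‖ + 1)) with hδdef
    have hδ0 : 0 < δ := by positivity
    have hTinf : (Set.Ioo (0:ℝ) δ).Infinite := Set.Ioo_infinite hδ0
    have hinj : Function.Injective (fun t : ℝ => ((1 - t : ℝ) : ℂ) * w) := by
      intro t₁ t₂ h
      simp only at h
      have h2 := mul_right_cancel₀ hw0 h
      have h3 : (1 - t₁ : ℝ) = (1 - t₂ : ℝ) := by exact_mod_cast h2
      linarith
    have hbadfin : ((fun t : ℝ => ((1 - t : ℝ) : ℂ) * w) ⁻¹' C).Finite :=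
      hCfin.preimage hinj.injOn
    obtain ⟨t, ht⟩ := (hTinf.diff hbadfin).nonempty
    have htIoo : t ∈ Set.Ioo (0:ℝ) δ := ht.1
    have htC : ((1 - t : ℝ) : ℂ) * w ∉ C := ht.2
    set w' : ℂ := ((1 - t : ℝ) : ℂ) * w with hw'def
    have ht0 : 0 < t := htIoo.1
    have ht1 : t < 1 := lt_of_lt_of_le htIoo.2 (le_trans (min_le_left _ _) le_rfl)
    have hw'norm : ‖w'‖ < r₁ := by
      rw [hw'def, norm_mul]
      have h1 : ‖((1 - t : ℝ) : ℂ)‖ = 1 - t := by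
        rw [Complex.norm_real, Real.norm_eq_abs, abs_of_pos (by linarith)]
      rw [h1]
      calc (1 - t) * ‖w‖ ≤ 1 * ‖w‖ := by
            apply mul_le_mul_of_nonneg_right _ (norm_nonneg _)
            linarith
        _ = ‖w‖ := one_mul _
        _ < r₁ := hw
    obtain ⟨z, hzmem, hzval⟩ := key w' hw'norm htC
    refine ⟨P z, ⟨z, hzmem, rfl⟩, ?_⟩
    rw [hzval, hw'def, dist_eq_norm]
    have hcalc : w - ((1 - t : ℝ) : ℂ) * w = (t : ℂ) * w := by
      push_cast
      ring
    rw [hcalc, norm_mul, Complex.norm_real, Real.norm_eq_abs, abs_of_pos ht0]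
    have htδ : t < ε / (‖w‖ + 1) := lt_of_lt_of_le htIoo.2 (min_le_right _ _)
    calc t * ‖w‖ ≤ t * (‖w‖ + 1) := by nlinarith [norm_nonneg w]
      _ < (ε / (‖w‖ + 1)) * (‖w‖ + 1) := by
          apply mul_lt_mul_of_pos_right htδ
          positivity
      _ = ε := by field_simp
  obtain ⟨z, hzmem, hzval⟩ := himgclosed.closure_subset hwcl
  exact ⟨z, hcbsub hzmem, hzval⟩
end

section
/- Let P : 𝔻 → 𝔻 be a proper holomorphic map of degree D with P(0) = 0, and fix ρ ∈ (0,1). Then there exists a constant C > 0 depending only on D and ρ such that for every connected set A ⊂ B(0,ρ), diam A ≤ C·(diam P(A))^{1/D}. -/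
open Metric Set Complex Filter Topology

lemma blaschke_ineq {b z : ℂ} (hb : ‖b‖ ≤ 1) (hz : ‖z‖ ≤ 1) :
    ‖z - b‖ ≤ ‖1 - (starRingEnd ℂ) b * z‖ := by
  have hb2 : normSq b ≤ 1 := by
    rw [← Complex.sq_norm]
    have h : ‖b‖ ≤ 1 := hb
    nlinarith [norm_nonneg b]
  have hz2 : normSq z ≤ 1 := by
    rw [← Complex.sq_norm]
    have h : ‖z‖ ≤ 1 := hz
    nlinarith [norm_nonneg z]
  have key : normSq (1 - (starRingEnd ℂ) b * z) - normSq (z - b)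
      = (1 - normSq b) * (1 - normSq z) := by
    simp only [normSq_apply, mul_re, mul_im, sub_re, sub_im, one_re, one_im, conj_re, conj_im]
    ring
  have h2 : normSq (z - b) ≤ normSq (1 - (starRingEnd ℂ) b * z) := by nlinarith
  rw [Complex.norm_def, Complex.norm_def]
  exact Real.sqrt_le_sqrt h2

lemma exists_factorization (T : Finset ℂ) :
    ∀ F : ℂ → ℂ, DifferentiableOn ℂ F (ball (0:ℂ) 1) →
      (∀ z ∈ ball (0:ℂ) 1, F z = 0 → z ∈ T) →
      ∃ (m : ℂ → ℕ) (H : ℂ → ℂ), DifferentiableOn ℂ H (ball (0:ℂ) 1) ∧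
        (∀ z ∈ ball (0:ℂ) 1, H z ≠ 0) ∧
        (∀ z ∈ ball (0:ℂ) 1, F z = (∏ b ∈ T, (z - b) ^ m b) * H z) := by
  classical
  induction T using Finset.induction_on with
  | empty =>
    intro F hF hzero
    exact ⟨fun _ => 0, F, hF, fun z hz h0 => absurd (hzero z hz h0) (Finset.notMem_empty z),
      fun z hz => by simp⟩
  | @insert b T' hb ih =>
    intro F hF hzero
    by_cases hbmem : b ∈ ball (0:ℂ) 1
    · -- b in the disk : divide out the zero at b
      have hFa : AnalyticAt ℂ F b := hF.analyticAt (isOpen_ball.mem_nhds hbmem)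
      have hnetop : analyticOrderAt F b ≠ ⊤ := by
        intro htop
        rw [analyticOrderAt_eq_top] at htop
        have h1 : ∀ᶠ z in 𝓝[≠] b, F z = 0 := htop.filter_mono nhdsWithin_le_nhds
        have h2 : ∀ᶠ z in 𝓝[≠] b, z ∈ ball (0:ℂ) 1 :=
          (isOpen_ball.eventually_mem hbmem).filter_mono nhdsWithin_le_nhds
        have h3 : ∀ᶠ z in 𝓝[≠] b, z ∉ (T' : Set ℂ) :=
          ((T'.finite_toSet.isClosed.isOpen_compl).eventually_mem
            (by simpa using hb)).filter_mono nhdsWithin_le_nhds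
        have h4 : ∀ᶠ z in 𝓝[≠] b, z ≠ b := self_mem_nhdsWithin
        obtain ⟨z, ⟨⟨hz1, hz2⟩, hz3⟩, hz4⟩ := (((h1.and h2).and h3).and h4).exists
        rcases Finset.mem_insert.1 (hzero z hz2 hz1) with h | h
        · exact hz4 h
        · exact hz3 h
      obtain ⟨n, hn⟩ := WithTop.ne_top_iff_exists.mp hnetop
      obtain ⟨g, hg, hgb, hev⟩ := hFa.analyticOrderAt_eq_natCast.mp hn.symm
      set F₁ : ℂ → ℂ := Function.update (fun z => F z / (z - b) ^ n) b (g b) with hF₁def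
      have hkey : ∀ z : ℂ, z ≠ b → F z = (z - b) ^ n * F₁ z := by
        intro z hz
        rw [hF₁def, Function.update_of_ne hz]
        field_simp [pow_ne_zero _ (sub_ne_zero.2 hz)]
      have hFb : F b = (b - b) ^ n * g b := by simpa using hev.self_of_nhds
      have hF₁ev : F₁ =ᶠ[𝓝 b] g := by
        filter_upwards [hev] with z hz
        by_cases h : z = b
        · subst h; simp [hF₁def]
        · rw [hF₁def, Function.update_of_ne h, hz, smul_eq_mul,
            mul_div_cancel_left₀ _ (pow_ne_zero _ (sub_ne_zero.2 h))]
      have hF₁diff : DifferentiableOn ℂ F₁ (ball (0:ℂ) 1) := by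
        intro z hz
        by_cases hzb : z = b
        · subst hzb
          exact (hg.differentiableAt.congr_of_eventuallyEq hF₁ev).differentiableWithinAt
        · have hd : DifferentiableWithinAt ℂ (fun w => F w / (w - b) ^ n) (ball (0:ℂ) 1) z :=
            (hF z hz).div (((differentiable_id.sub_const b).pow n) z).differentiableWithinAt
              (pow_ne_zero _ (sub_ne_zero.2 hzb))
          refine hd.congr_of_eventuallyEq ?_ ?_
          · filter_upwards [mem_nhdsWithin_of_mem_nhds
              (isOpen_compl_singleton.eventually_mem hzb)] with w hw
            rw [hF₁def, Function.update_of_ne hw]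
          · rw [hF₁def, Function.update_of_ne hzb]
      have hF₁zero : ∀ z ∈ ball (0:ℂ) 1, F₁ z = 0 → z ∈ T' := by
        intro z hz h0
        by_cases hzb : z = b
        · subst hzb
          rw [hF₁def, Function.update_self] at h0
          exact absurd h0 hgb
        · have : F z = 0 := by rw [hkey z hzb, h0, mul_zero]
          rcases Finset.mem_insert.1 (hzero z hz this) with h | h
          · exact absurd h hzb
          · exact h
      obtain ⟨m', H, hH, hH0, hprod⟩ := ih F₁ hF₁diff hF₁zero
      have hF₁b : F₁ b = g b := by rw [hF₁def]; simp
      have hkey' : ∀ z : ℂ, F z = (z - b) ^ n * F₁ z := by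
        intro z
        by_cases h : z = b
        · rw [h, hFb, hF₁b]
        · exact hkey z h
      refine ⟨Function.update m' b n, H, hH, hH0, fun z hz => ?_⟩
      rw [Finset.prod_insert hb, Function.update_self]
      have hPc : ∏ c ∈ T', (z - c) ^ (Function.update m' b n) c
          = ∏ c ∈ T', (z - c) ^ m' c :=
        Finset.prod_congr rfl fun c hc => by
          rw [Function.update_of_ne (by intro h; subst h; exact hb hc)]
      rw [hPc, hkey' z, hprod z hz]
      ring
    · -- b outside the disk
      obtain ⟨m, H, h1, h2, h3⟩ := ih F hF (fun z hz h0 => by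
        rcases Finset.mem_insert.1 (hzero z hz h0) with h | h
        · exact absurd (h ▸ hz) hbmem
        · exact h)
      refine ⟨Function.update m b 0, H, h1, h2, fun z hz => ?_⟩
      rw [Finset.prod_insert hb, Function.update_self, pow_zero, one_mul, h3 z hz]
      congr 1
      exact Finset.prod_congr rfl fun c hc => by
        rw [Function.update_of_ne (by intro h; subst h; exact hb hc)]


lemma exists_preimages (m : ℕ) (b : ℂ) (r : ℝ) (hr : 0 < r) (u : ℂ → ℂ)
    (hu : DifferentiableOn ℂ u (ball b r)) (hu0 : ∀ z ∈ ball b r, u z ≠ 0) :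
    ∃ ε : ℝ, 0 < ε ∧ ∀ τ : ℝ, 0 < τ → τ ≤ ε →
      ∃ zs : Finset ℂ, zs.card = m ∧ ∀ z ∈ zs, z ∈ ball b r ∧ (z - b) ^ m * u z = (τ : ℂ) := by
  rcases Nat.eq_zero_or_pos m with hm | hm
  · subst hm
    exact ⟨1, one_pos, fun τ _ _ =>
      ⟨∅, rfl, fun z hz => absurd hz (Finset.notMem_empty z)⟩⟩
  have hmne : m ≠ 0 := hm.ne'
  have hm0 : (m : ℂ) ≠ 0 := Nat.cast_ne_zero.2 hmne
  have hmR : (m : ℝ) ≠ 0 := Nat.cast_ne_zero.2 hmne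
  set c := u b with hc
  have hcne : c ≠ 0 := hu0 b (mem_ball_self hr)
  have hWopen : IsOpen (ball b r ∩ (fun z => u z / c) ⁻¹' Complex.slitPlane) :=
    (hu.continuousOn.div_const c).isOpen_inter_preimage isOpen_ball Complex.isOpen_slitPlane
  have hbW : b ∈ ball b r ∩ (fun z => u z / c) ⁻¹' Complex.slitPlane := by
    refine ⟨mem_ball_self hr, ?_⟩
    show u b / c ∈ Complex.slitPlane
    rw [← hc, div_self hcne]
    exact Complex.one_mem_slitPlane
  obtain ⟨r₁, hr₁pos, hball₁⟩ := Metric.isOpen_iff.mp hWopen b hbW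
  set ζ0 : ℂ := Complex.exp (Complex.log c / m) with hζ0def
  have hζ0 : ζ0 ^ m = c := by
    rw [hζ0def, ← Complex.exp_nat_mul, mul_div_cancel₀ _ hm0, Complex.exp_log hcne]
  set v : ℂ → ℂ := fun z => ζ0 * Complex.exp (Complex.log (u z / c) / m) with hvdef
  have hv : ∀ z ∈ ball b r₁, v z ^ m = u z := by
    intro z hz
    have h1 : u z ≠ 0 := hu0 z (hball₁ hz).1
    have h2 : u z / c ≠ 0 := div_ne_zero h1 hcne
    rw [hvdef]
    simp only
    rw [mul_pow, hζ0, ← Complex.exp_nat_mul, mul_div_cancel₀ _ hm0, Complex.exp_log h2]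
    field_simp
  set ψ : ℂ → ℂ := fun z => (z - b) * v z with hψdef
  have hψdiff : DifferentiableOn ℂ ψ (ball b r₁) := by
    intro z hz
    have hzW := hball₁ hz
    have hu' : DifferentiableAt ℂ u z := hu.differentiableAt (isOpen_ball.mem_nhds hzW.1)
    have hlog : DifferentiableAt ℂ (fun w => Complex.log (u w / c)) z :=
      (hu'.div_const c).clog hzW.2
    exact ((differentiableAt_id.sub_const b).mul
      ((differentiableAt_const ζ0).mul ((hlog.div_const (m : ℂ)).cexp))).differentiableWithinAt
  have hψa : AnalyticAt ℂ ψ b := hψdiff.analyticAt (isOpen_ball.mem_nhds (mem_ball_self hr₁pos))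
  have hψb : ψ b = 0 := by rw [hψdef]; simp
  have hvne : ∀ z, v z ≠ 0 := fun z =>
    mul_ne_zero (Complex.exp_ne_zero _) (Complex.exp_ne_zero _)
  have hnc : ¬ ∀ᶠ z in 𝓝 b, ψ z = ψ b := by
    intro hcst
    rw [hψb] at hcst
    obtain ⟨z, hz1, hz2⟩ := ((hcst.filter_mono nhdsWithin_le_nhds).and
      (self_mem_nhdsWithin (s := {b}ᶜ))).exists
    exact mul_ne_zero (sub_ne_zero.2 hz2) (hvne z) hz1
  have hmap : 𝓝 (ψ b) ≤ Filter.map ψ (𝓝 b) :=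
    hψa.eventually_constant_or_nhds_le_map_nhds.resolve_left hnc
  have himg : ψ '' ball b r₁ ∈ 𝓝 (0 : ℂ) := by
    rw [← hψb]
    exact hmap (Filter.image_mem_map (isOpen_ball.mem_nhds (mem_ball_self hr₁pos)))
  obtain ⟨ε', hε', hsub⟩ := Metric.mem_nhds_iff.mp himg
  refine ⟨(ε' / 2) ^ m, by positivity, fun τ hτ hτε => ?_⟩
  set ρ₀ : ℝ := τ ^ ((m : ℝ)⁻¹) with hρ₀def
  have hρ₀pos : 0 < ρ₀ := Real.rpow_pos_of_pos hτ _
  have hρ₀m : ρ₀ ^ m = τ := by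
    rw [hρ₀def, ← Real.rpow_natCast (τ ^ ((m : ℝ)⁻¹)) m, ← Real.rpow_mul hτ.le,
      inv_mul_cancel₀ hmR, Real.rpow_one]
  have hρ₀lt : ρ₀ < ε' := by
    have h1 : ρ₀ ≤ ε' / 2 := by
      have h2 : ρ₀ ≤ ((ε' / 2) ^ m) ^ ((m : ℝ)⁻¹) :=
        Real.rpow_le_rpow hτ.le hτε (by positivity)
      rwa [← Real.rpow_natCast (ε' / 2) m, ← Real.rpow_mul (by positivity),
        mul_inv_cancel₀ hmR, Real.rpow_one] at h2
    linarith
  set ω : ℂ := Complex.exp (2 * Real.pi * Complex.I / m) with hωdef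
  have hprim : IsPrimitiveRoot ω m := Complex.isPrimitiveRoot_exp m hmne
  have hωnorm : ∀ k : ℕ, ‖ω ^ k‖ = 1 := by
    intro k
    rw [norm_pow, hωdef]
    rw [show (2 * (Real.pi : ℂ) * Complex.I / (m : ℂ)) = ((2 * Real.pi / m : ℝ) : ℂ) * Complex.I
      by push_cast; ring]
    rw [Complex.norm_exp_ofReal_mul_I, one_pow]
  have hζmem : ∀ k : Fin m, ((ρ₀ : ℂ) * ω ^ (k : ℕ)) ∈ ball (0 : ℂ) ε' := by
    intro k
    rw [mem_ball_zero_iff, norm_mul, hωnorm, mul_one, Complex.norm_real,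
      Real.norm_eq_abs, abs_of_pos hρ₀pos]
    exact hρ₀lt
  have hex : ∀ k : Fin m, ∃ z, z ∈ ball b r₁ ∧ ψ z = (ρ₀ : ℂ) * ω ^ (k : ℕ) := by
    intro k
    obtain ⟨z, hz, hψz⟩ := hsub (hζmem k)
    exact ⟨z, hz, hψz⟩
  choose zf hzf₁ hzf₂ using hex
  have hρ₀Cne : (ρ₀ : ℂ) ≠ 0 := Complex.ofReal_ne_zero.2 hρ₀pos.ne'
  have hinj : Function.Injective zf := by
    intro k k' hkk
    have : (ρ₀ : ℂ) * ω ^ (k : ℕ) = (ρ₀ : ℂ) * ω ^ (k' : ℕ) := by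
      rw [← hzf₂ k, ← hzf₂ k', hkk]
    exact Fin.ext (hprim.pow_inj k.2 k'.2 (mul_left_cancel₀ hρ₀Cne this))
  refine ⟨Finset.image zf Finset.univ, ?_, ?_⟩
  · rw [Finset.card_image_of_injective _ hinj, Finset.card_univ, Fintype.card_fin]
  · intro z hz
    obtain ⟨k, _, rfl⟩ := Finset.mem_image.1 hz
    refine ⟨(hball₁ (hzf₁ k)).1, ?_⟩
    calc (zf k - b) ^ m * u (zf k) = ((zf k - b) * v (zf k)) ^ m := by
          rw [mul_pow, hv _ (hzf₁ k)]
      _ = ((ρ₀ : ℂ) * ω ^ (k : ℕ)) ^ m := by rw [show (zf k - b) * v (zf k) = ψ (zf k) from rfl, hzf₂]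
      _ = (τ : ℂ) := by
          rw [mul_pow, ← pow_mul, mul_comm (k : ℕ) m, pow_mul, hprim.pow_eq_one, one_pow,
            mul_one, ← Complex.ofReal_pow, hρ₀m]

set_option maxHeartbeats 4000000 in
theorem proper_disk_diam_holder (D : ℕ) (hD : 1 ≤ D)
    (ρ : ℝ) (hρ0 : 0 < ρ) (hρ1 : ρ < 1) :
    ∃ C : ℝ, 0 < C ∧ ∀ P : ℂ → ℂ,
      DifferentiableOn ℂ P (ball (0 : ℂ) 1) →
      MapsTo P (ball (0 : ℂ) 1) (ball (0 : ℂ) 1) →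
      (∀ K ⊆ ball (0 : ℂ) 1, IsCompact K → IsCompact {z ∈ ball (0 : ℂ) 1 | P z ∈ K}) →
      (∀ w ∈ ball (0 : ℂ) 1, {z ∈ ball (0 : ℂ) 1 | P z = w}.Finite ∧
        1 ≤ {z ∈ ball (0 : ℂ) 1 | P z = w}.ncard ∧
        {z ∈ ball (0 : ℂ) 1 | P z = w}.ncard ≤ D) →
      (∃ w ∈ ball (0 : ℂ) 1, {z ∈ ball (0 : ℂ) 1 | P z = w}.ncard = D) →
      P 0 = 0 →
      ∀ A : Set ℂ, A ⊆ ball (0 : ℂ) ρ → IsConnected A →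
        diam A ≤ C * (diam (P '' A)) ^ ((D : ℝ)⁻¹) := by
  classical
  have h1ρ : 0 < 1 - ρ := by linarith
  set C : ℝ := 32 * ((D:ℝ) + 1) / (1 - ρ) with hCdef
  have hCpos : 0 < C := div_pos (by positivity) h1ρ
  refine ⟨C, hCpos, ?_⟩
  intro P hdiff hmaps hproper hfib hdeg hP0 A hA hconn
  have hball : ball (0:ℂ) ρ ⊆ ball (0:ℂ) 1 := ball_subset_ball hρ1.le
  -- trivial case: diam A = 0
  rcases eq_or_lt_of_le (diam_nonneg (s := A)) with hδ0 | hδ0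
  · rw [← hδ0]
    positivity
  -- two far apart points of A
  have hfar : ∃ z1 ∈ A, ∃ z0 ∈ A, diam A / 2 ≤ dist z1 z0 := by
    by_contra hcon
    push_neg at hcon
    have : diam A ≤ diam A / 2 :=
      diam_le_of_forall_dist_le (by linarith) (fun x hx y hy => (hcon x hx y hy).le)
    linarith
  obtain ⟨z1, hz1A, z0, hz0A, hdist⟩ := hfar
  have hz0b1 : z0 ∈ ball (0:ℂ) 1 := hball (hA hz0A)
  set w0 : ℂ := P z0 with hw0def
  have hw0ρ : ‖w0‖ < ρ := by
    have h1 : ‖P z0‖ ≤ ‖z0‖ :=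
      Complex.norm_le_norm_of_mapsTo_ball hdiff (hmaps.mono_right ball_subset_closedBall) hP0
        (mem_ball_zero_iff.1 hz0b1)
    have h2 : ‖z0‖ < ρ := mem_ball_zero_iff.1 (hA hz0A)
    calc ‖w0‖ = ‖P z0‖ := rfl
      _ ≤ ‖z0‖ := h1
      _ = ‖z0‖ := rfl
      _ < ρ := h2
  have hw0b : w0 ∈ ball (0:ℂ) 1 := mem_ball_zero_iff.2 (hw0ρ.trans hρ1)
  obtain ⟨hSfin, hS1, hSD⟩ := hfib w0 hw0b
  set T : Finset ℂ := hSfin.toFinset with hTdef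
  have hTmem : ∀ {z : ℂ}, z ∈ T ↔ z ∈ ball (0:ℂ) 1 ∧ P z = w0 := by
    intro z
    rw [hTdef, Set.Finite.mem_toFinset]
    exact Iff.rfl
  have hTcard : T.card ≤ D := by
    rw [hTdef, ← Set.ncard_eq_toFinset_card _ hSfin]
    exact hSD
  have hTne : T.Nonempty := ⟨z0, hTmem.2 ⟨hz0b1, rfl⟩⟩
  have hTball : ∀ b ∈ T, ‖b‖ < 1 := fun b hb => mem_ball_zero_iff.1 (hTmem.1 hb).1
  -- factorization of F = P - w0
  set F : ℂ → ℂ := fun z => P z - w0 with hFdef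
  have hFdiff : DifferentiableOn ℂ F (ball (0:ℂ) 1) := hdiff.sub_const w0
  obtain ⟨m, H, hH, hH0, hFeq⟩ := exists_factorization T F hFdiff
    (fun z hz h0 => hTmem.2 ⟨hz, sub_eq_zero.mp h0⟩)
  set M : ℕ := ∑ b ∈ T, m b with hMdef
  ---------------------------------------------------------------
  -- Part I : M ≤ D
  ---------------------------------------------------------------
  set sep : ℂ → ℝ := fun b =>
    if h : (T.erase b).Nonempty then (T.erase b).inf' h (fun c => dist b c) else 1 with hsepdef
  have hsep_pos : ∀ b, 0 < sep b := by
    intro b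
    rw [hsepdef]
    dsimp only
    split_ifs with h
    · rw [Finset.lt_inf'_iff]
      intro c hc
      exact dist_pos.2 fun e => (Finset.mem_erase.1 hc).1 e.symm
    · exact one_pos
  have hsep_le : ∀ b, ∀ c ∈ T, c ≠ b → sep b ≤ dist b c := by
    intro b c hc hne
    have h : (T.erase b).Nonempty := ⟨c, Finset.mem_erase.2 ⟨hne, hc⟩⟩
    rw [hsepdef]
    dsimp only
    rw [dif_pos h]
    exact Finset.inf'_le _ (Finset.mem_erase.2 ⟨hne, hc⟩)
  set rb : ℂ → ℝ := fun b => (1/2) * min (1 - ‖b‖) (sep b) with hrbdef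
  have hrb_pos : ∀ b ∈ T, 0 < rb b := by
    intro b hb
    have hb1 : ‖b‖ < 1 := hTball b hb
    have := hsep_pos b
    rw [hrbdef]
    dsimp only
    have : 0 < min (1 - ‖b‖) (sep b) := lt_min (by linarith) (hsep_pos b)
    linarith
  have hrb_le_sep : ∀ b, rb b ≤ sep b / 2 := by
    intro b
    rw [hrbdef]
    dsimp only
    have := min_le_right (1 - ‖b‖) (sep b)
    linarith
  have hrb_sub : ∀ b ∈ T, ball b (rb b) ⊆ ball (0:ℂ) 1 := by
    intro b hb z hz
    rw [mem_ball_zero_iff]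
    have h1 : ‖z - b‖ < rb b := by rw [← dist_eq_norm]; exact mem_ball.1 hz
    have h2 : rb b ≤ (1 - ‖b‖) / 2 := by
      rw [hrbdef]
      dsimp only
      have := min_le_left (1 - ‖b‖) (sep b)
      linarith
    have h3 : ‖z‖ ≤ ‖z - b‖ + ‖b‖ := by
      calc ‖z‖ = ‖z - b + b‖ := by ring_nf
        _ ≤ ‖z - b‖ + ‖b‖ := norm_add_le _ _
    have hb1 : ‖b‖ < 1 := hTball b hb
    linarith
  have hcount : ∀ b ∈ T, ∃ ε : ℝ, 0 < ε ∧ ∀ τ : ℝ, 0 < τ → τ ≤ ε →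
      ∃ zs : Finset ℂ, zs.card = m b ∧
        ∀ z ∈ zs, z ∈ ball b (rb b) ∧ P z = w0 + τ := by
    intro b hb
    set u : ℂ → ℂ := fun z => (∏ c ∈ T.erase b, (z - c) ^ m c) * H z with hudef
    have hudiff : DifferentiableOn ℂ u (ball b (rb b)) := by
      apply DifferentiableOn.mul
      · exact (Differentiable.fun_finsetProd (fun c _ =>
          (differentiable_id.sub_const c).pow (m c))).differentiableOn
      · exact hH.mono (hrb_sub b hb)
    have hune : ∀ z ∈ ball b (rb b), u z ≠ 0 := by
      intro z hz
      apply mul_ne_zero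
      · rw [Finset.prod_ne_zero_iff]
        intro c hc
        apply pow_ne_zero
        apply sub_ne_zero.2
        intro e
        obtain ⟨hcb, hcT⟩ := Finset.mem_erase.1 hc
        have hzb : dist z b < rb b := mem_ball.1 hz
        have h2 : sep b ≤ dist b c := hsep_le b c hcT hcb
        have h3 : rb b ≤ sep b / 2 := hrb_le_sep b
        have h4 : (0:ℝ) ≤ dist b c := dist_nonneg
        rw [e] at hzb
        rw [dist_comm] at hzb
        linarith
      · exact hH0 z (hrb_sub b hb hz)
    obtain ⟨ε, hεpos, hspec⟩ := exists_preimages (m b) b (rb b) (hrb_pos b hb) u hudiff hune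
    refine ⟨ε, hεpos, fun τ hτ0 hτε => ?_⟩
    obtain ⟨zs, hcard, hmem⟩ := hspec τ hτ0 hτε
    refine ⟨zs, hcard, fun z hz => ?_⟩
    obtain ⟨hzmem, hzeq⟩ := hmem z hz
    refine ⟨hzmem, ?_⟩
    have hzball : z ∈ ball (0:ℂ) 1 := hrb_sub b hb hzmem
    have h1 : F z = (z - b) ^ m b * u z := by
      rw [hFeq z hzball, hudef, ← Finset.mul_prod_erase T _ hb]
      ring
    have h2 : F z = (τ : ℂ) := by rw [h1]; exact hzeq
    have h3 : P z - w0 = (τ : ℂ) := h2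
    linear_combination h3
  choose! εf hεf hεspec using hcount
  set τ : ℝ := min ((1 - ρ)/2) (T.inf' hTne εf) with hτdef
  have hτpos : 0 < τ := by
    apply lt_min (by linarith)
    rw [Finset.lt_inf'_iff]
    exact hεf
  have hτle : ∀ b ∈ T, τ ≤ εf b := fun b hb =>
    le_trans (min_le_right _ _) (Finset.inf'_le εf hb)
  have hw' : w0 + (τ : ℂ) ∈ ball (0:ℂ) 1 := by
    rw [mem_ball_zero_iff]
    have h1 : ‖(τ:ℂ)‖ = τ := by
      rw [Complex.norm_real, Real.norm_eq_abs, abs_of_pos hτpos]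
    have h2 : τ ≤ (1 - ρ)/2 := min_le_left _ _
    calc ‖w0 + (τ:ℂ)‖ ≤ ‖w0‖ + ‖(τ:ℂ)‖ := norm_add_le _ _
      _ < ρ + (1 - ρ)/2 := by rw [h1]; linarith
      _ < 1 := by linarith
  have hzs : ∀ b ∈ T, ∃ zs : Finset ℂ, zs.card = m b ∧
      ∀ z ∈ zs, z ∈ ball b (rb b) ∧ P z = w0 + τ :=
    fun b hb => hεspec b hb τ hτpos (hτle b hb)
  choose! zsf hzscard hzsmem using hzs
  have hdisj : ∀ b ∈ T, ∀ c ∈ T, b ≠ c → Disjoint (zsf b) (zsf c) := by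
    intro b hb c hc hbc
    rw [Finset.disjoint_left]
    intro z hzb hzc
    have h1 : dist z b < rb b := mem_ball.1 (hzsmem b hb z hzb).1
    have h2 : dist z c < rb c := mem_ball.1 (hzsmem c hc z hzc).1
    have h3 : sep b ≤ dist b c := hsep_le b c hc (fun e => hbc e.symm)
    have h4 : sep c ≤ dist c b := hsep_le c b hb hbc
    have h5 := hrb_le_sep b
    have h6 := hrb_le_sep c
    have h7 : dist b c ≤ dist b z + dist z c := dist_triangle _ _ _
    rw [dist_comm b z] at h7
    rw [dist_comm c b] at h4
    linarith
  set ZS : Finset ℂ := T.biUnion zsf with hZSdef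
  have hZScard : ZS.card = M := by
    rw [hZSdef, Finset.card_biUnion hdisj]
    exact Finset.sum_congr rfl fun b hb => hzscard b hb
  have hMD : M ≤ D := by
    have h2 : (↑ZS : Set ℂ) ⊆ {z ∈ ball (0:ℂ) 1 | P z = w0 + ↑τ} := by
      intro z hz
      rw [Finset.mem_coe, hZSdef, Finset.mem_biUnion] at hz
      obtain ⟨b, hb, hzb⟩ := hz
      obtain ⟨hz1, hz2⟩ := hzsmem b hb z hzb
      exact ⟨hrb_sub b hb hz1, hz2⟩
    calc M = ZS.card := hZScard.symm
      _ = (↑ZS : Set ℂ).ncard := (Set.ncard_coe_finset ZS).symm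
      _ ≤ {z ∈ ball (0:ℂ) 1 | P z = w0 + ↑τ}.ncard :=
          Set.ncard_le_ncard h2 (hfib _ hw').1
      _ ≤ D := (hfib _ hw').2.2
  ---------------------------------------------------------------
  -- Part II : lower bound for ‖F z‖ on ball 0 ρ
  ---------------------------------------------------------------
  set s' : ℝ := (1 + ρ)/2 with hs'def
  have hs'1 : s' < 1 := by rw [hs'def]; linarith
  have hK' := hproper (closedBall (0:ℂ) s') (closedBall_subset_ball hs'1)
    (isCompact_closedBall _ _)
  obtain ⟨t, ht1, htK⟩ : ∃ t : ℝ, t < 1 ∧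
      ∀ z ∈ {z ∈ ball (0:ℂ) 1 | P z ∈ closedBall (0:ℂ) s'}, ‖z‖ ≤ t := by
    rcases Set.eq_empty_or_nonempty {z ∈ ball (0:ℂ) 1 | P z ∈ closedBall (0:ℂ) s'} with he | hne
    · exact ⟨0, one_pos, by rw [he]; simp⟩
    · obtain ⟨zm, hzm, hmax⟩ := hK'.exists_isMaxOn hne continuous_norm.continuousOn
      exact ⟨‖zm‖, mem_ball_zero_iff.1 hzm.1, fun z hz => hmax hz⟩
  set amax : ℝ := max ρ (max t (T.sup' hTne (fun b => ‖b‖))) with hamaxdef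
  have hamax1 : amax < 1 := by
    rw [hamaxdef]
    apply max_lt hρ1
    apply max_lt ht1
    rw [Finset.sup'_lt_iff]
    exact fun b hb => hTball b hb
  have hamax0 : 0 < amax := lt_of_lt_of_le hρ0 (le_max_left _ _)
  set r : ℝ := (1 + amax)/2 with hrdef
  have har : amax < r := by rw [hrdef]; linarith
  have hr1 : r < 1 := by rw [hrdef]; linarith
  have hrpos : 0 < r := by rw [hrdef]; linarith
  set Den : ℂ → ℂ := fun z => ∏ b ∈ T, (1 - (starRingEnd ℂ) b * z) ^ m b with hDendef
  have hDen_diff : Differentiable ℂ Den :=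
    Differentiable.fun_finsetProd fun b _ =>
      ((differentiable_const (1:ℂ)).sub ((differentiable_const _).mul differentiable_id)).pow _
  have hDen_ne : ∀ z ∈ ball (0:ℂ) 1, Den z ≠ 0 := by
    intro z hz
    rw [hDendef]
    dsimp only
    rw [Finset.prod_ne_zero_iff]
    intro b hb
    apply pow_ne_zero
    intro h0
    have h1 : ‖(starRingEnd ℂ) b * z‖ < 1 := by
      rw [norm_mul, RCLike.norm_conj]
      have := hTball b hb
      have := mem_ball_zero_iff.1 hz
      nlinarith [norm_nonneg b, norm_nonneg z]
    have h2 : (1 : ℂ) = (starRingEnd ℂ) b * z := by linear_combination h0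
    rw [← h2] at h1
    simp at h1
  set J : ℂ → ℂ := fun z => (Den z * H z)⁻¹ with hJdef
  have hJdiff : DifferentiableOn ℂ J (ball (0:ℂ) 1) :=
    (hDen_diff.differentiableOn.mul hH).inv
      (fun z hz => mul_ne_zero (hDen_ne z hz) (hH0 z hz))
  have hN_eq : ∀ z ∈ ball (0:ℂ) 1, ‖F z‖ = (∏ b ∈ T, ‖z - b‖ ^ m b) * ‖H z‖ := by
    intro z hz
    rw [hFeq z hz, norm_mul, norm_prod]
    congr 1
    exact Finset.prod_congr rfl fun b _ => norm_pow _ _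
  have hmaxmod : ∀ z ∈ ball (0:ℂ) ρ, ‖J z‖ ≤ 2 / (1 - ρ) := by
    intro z hz
    have hclos : closure (ball (0:ℂ) r) = closedBall (0:ℂ) r := closure_ball _ hrpos.ne'
    apply Complex.norm_le_of_forall_mem_frontier_norm_le isBounded_ball
    · apply DifferentiableOn.diffContOnCl
      rw [hclos]
      exact hJdiff.mono (closedBall_subset_ball hr1)
    · intro ζ hζ
      rw [frontier_ball _ hrpos.ne'] at hζ
      have hζr : ‖ζ‖ = r := mem_sphere_zero_iff_norm.1 hζ
      have hζ1 : ζ ∈ ball (0:ℂ) 1 := mem_ball_zero_iff.2 (by rw [hζr]; exact hr1)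
      have hPζ : s' < ‖P ζ‖ := by
        by_contra hle
        push_neg at hle
        have : ζ ∈ {z ∈ ball (0:ℂ) 1 | P z ∈ closedBall (0:ℂ) s'} :=
          ⟨hζ1, mem_closedBall_zero_iff.2 hle⟩
        have := htK ζ this
        have h4 : t < r := lt_of_le_of_lt (le_max_left t _ |>.trans (le_max_right ρ _)) har
        rw [hζr] at this
        linarith
      have hFζ : (1 - ρ)/2 ≤ ‖F ζ‖ := by
        have h1 : ‖P ζ‖ - ‖w0‖ ≤ ‖P ζ - w0‖ := norm_sub_norm_le _ _
        have : (F ζ : ℂ) = P ζ - w0 := rfl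
        rw [this]
        rw [hs'def] at hPζ
        linarith
      have hNζ : ‖∏ b ∈ T, (ζ - b) ^ m b‖ ≤ ‖Den ζ‖ := by
        rw [norm_prod, hDendef]
        dsimp only
        rw [norm_prod]
        apply Finset.prod_le_prod (fun b _ => by positivity)
        intro b hb
        rw [norm_pow, norm_pow]
        apply pow_le_pow_left₀ (norm_nonneg _)
        exact blaschke_ineq (hTball b hb).le (by rw [hζr]; exact hr1.le)
      have hDH : (1 - ρ)/2 ≤ ‖Den ζ * H ζ‖ := by
        have h1 : ‖F ζ‖ = ‖(∏ b ∈ T, (ζ - b) ^ m b) * H ζ‖ := by rw [hFeq ζ hζ1]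
        rw [norm_mul] at h1 ⊢
        calc (1 - ρ)/2 ≤ ‖F ζ‖ := hFζ
          _ = ‖∏ b ∈ T, (ζ - b) ^ m b‖ * ‖H ζ‖ := h1
          _ ≤ ‖Den ζ‖ * ‖H ζ‖ := mul_le_mul_of_nonneg_right hNζ (norm_nonneg _)
      rw [hJdef]
      dsimp only
      rw [norm_inv]
      have h2 : (2 / (1 - ρ))⁻¹ = (1 - ρ)/2 := by rw [inv_div]
      apply inv_le_of_inv_le₀ (by positivity)
      rw [h2]
      exact hDH
    · rw [hclos]
      have h1 : ‖z‖ < ρ := mem_ball_zero_iff.1 hz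
      have h2 : ρ ≤ r := le_of_lt (lt_of_le_of_lt (le_max_left ρ _) har)
      exact mem_closedBall_zero_iff.2 (by linarith)
  have hlow : ∀ z ∈ ball (0:ℂ) ρ,
      (1 - ρ)/2 * (∏ b ∈ T, ‖z - b‖ ^ m b) / 2 ^ M ≤ ‖F z‖ := by
    intro z hz
    have hz1 : z ∈ ball (0:ℂ) 1 := hball hz
    have hDHne : Den z * H z ≠ 0 := mul_ne_zero (hDen_ne z hz1) (hH0 z hz1)
    have h1 : (1 - ρ)/2 ≤ ‖Den z * H z‖ := by
      have h0 := hmaxmod z hz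
      rw [hJdef] at h0
      dsimp only at h0
      rw [norm_inv] at h0
      have h2 : (2 / (1 - ρ))⁻¹ = (1 - ρ)/2 := by rw [inv_div]
      have h3 := inv_le_of_inv_le₀ (show (0:ℝ) < ‖Den z * H z‖ from norm_pos_iff.2 hDHne) h0
      rw [h2] at h3
      exact h3
    have h2 : ‖Den z‖ ≤ 2 ^ M := by
      rw [hDendef]
      dsimp only
      rw [norm_prod]
      calc ∏ b ∈ T, ‖(1 - (starRingEnd ℂ) b * z) ^ m b‖
          ≤ ∏ b ∈ T, 2 ^ m b := by
            apply Finset.prod_le_prod (fun b _ => norm_nonneg _)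
            intro b hb
            rw [norm_pow]
            apply pow_le_pow_left₀ (norm_nonneg _)
            have hb1 : ‖(starRingEnd ℂ) b * z‖ ≤ 1 := by
              rw [norm_mul, RCLike.norm_conj]
              have h3 := (hTball b hb).le
              have h4 := (mem_ball_zero_iff.1 hz1).le
              nlinarith [norm_nonneg b, norm_nonneg z]
            calc ‖1 - (starRingEnd ℂ) b * z‖ ≤ ‖(1:ℂ)‖ + ‖(starRingEnd ℂ) b * z‖ :=
                  norm_sub_le _ _
              _ ≤ 2 := by rw [norm_one]; linarith
        _ = 2 ^ M := by rw [hMdef, Finset.prod_pow_eq_pow_sum]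
    have hDpos : 0 < ‖Den z‖ := norm_pos_iff.2 (hDen_ne z hz1)
    have h3 : (1 - ρ)/2 / 2 ^ M ≤ ‖H z‖ := by
      rw [norm_mul] at h1
      have h4 : (1 - ρ)/2 / 2 ^ M ≤ ‖Den z‖ * ‖H z‖ / ‖Den z‖ :=
        div_le_div₀ (by positivity) h1 hDpos h2
      rwa [mul_comm, mul_div_assoc, div_self hDpos.ne', mul_one] at h4
    rw [hN_eq z hz1]
    calc (1 - ρ)/2 * (∏ b ∈ T, ‖z - b‖ ^ m b) / 2 ^ M
        = (∏ b ∈ T, ‖z - b‖ ^ m b) * ((1 - ρ)/2 / 2 ^ M) := by ring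
      _ ≤ (∏ b ∈ T, ‖z - b‖ ^ m b) * ‖H z‖ :=
          mul_le_mul_of_nonneg_left h3 (Finset.prod_nonneg fun b _ => by positivity)
  ---------------------------------------------------------------
  -- Part III : selection of a good point and conclusion
  ---------------------------------------------------------------
  set δ : ℝ := diam A with hδdef
  set γ : ℝ := δ / (4 * ((D:ℝ) + 1)) with hγdef
  have hγpos : 0 < γ := by
    rw [hγdef]
    exact div_pos hδ0 (by positivity)
  have hδ2 : δ ≤ 2 * ρ := by
    calc δ ≤ diam (ball (0:ℂ) ρ) := diam_mono hA isBounded_ball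
      _ ≤ 2 * ρ := diam_ball hρ0.le
  have hγ1 : γ ≤ 1/4 := by
    rw [hγdef, div_le_iff₀ (by positivity)]
    have hD1 : (1:ℝ) ≤ D := by exact_mod_cast hD
    linarith [hδ2, hρ1, hD1]
  have him : Icc (0:ℝ) (dist z1 z0) ⊆ (fun z => dist z z0) '' A := by
    have h0 : dist z0 z0 = 0 := dist_self z0
    have h1 := hconn.isPreconnected.intermediate_value (f := fun z => dist z z0) hz0A hz1A
      ((continuous_id.dist continuous_const).continuousOn)
    simpa using h1
  have hsel : ∀ j : Fin (D+1), ∃ z ∈ A, dist z z0 = ((j:ℝ) + 1) * γ := by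
    intro j
    have hj1 : ((j:ℝ) + 1) * γ ≤ dist z1 z0 := by
      have h1 : ((j:ℝ) + 1) ≤ (D:ℝ) + 1 := by
        have h2 : ((j:ℕ):ℝ) ≤ D := by exact_mod_cast Nat.lt_succ_iff.1 j.2
        linarith
      have h2 : ((j:ℝ) + 1) * γ ≤ ((D:ℝ) + 1) * γ :=
        mul_le_mul_of_nonneg_right h1 hγpos.le
      have h3 : ((D:ℝ) + 1) * γ = δ / 4 := by
        rw [hγdef]
        field_simp
      linarith [hdist]
    obtain ⟨z, hzA, hzd⟩ := him ⟨by positivity, hj1⟩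
    exact ⟨z, hzA, hzd⟩
  choose zj hzjA hzjd using hsel
  have hgood : ∃ j : Fin (D+1), ∀ b ∈ T, γ/2 ≤ dist (zj j) b := by
    by_contra hcon
    push_neg at hcon
    choose gb hgbT hgbd using hcon
    have hinj : Function.Injective gb := by
      intro j j' he
      have h1 : dist (zj j) (zj j') < γ := by
        calc dist (zj j) (zj j') ≤ dist (zj j) (gb j) + dist (gb j) (zj j') :=
              dist_triangle _ _ _
          _ < γ/2 + γ/2 := by
              apply add_lt_add (hgbd j)
              rw [he, dist_comm]
              exact hgbd j'
          _ = γ := by ring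
      have h2 : |((j:ℝ) + 1) * γ - ((j':ℝ) + 1) * γ| ≤ dist (zj j) (zj j') := by
        rw [← hzjd j, ← hzjd j']
        exact abs_dist_sub_le _ _ _
      have h3 : |(j:ℝ) - (j':ℝ)| * γ < γ := by
        have h4 : |((j:ℝ) + 1) * γ - ((j':ℝ) + 1) * γ| = |(j:ℝ) - (j':ℝ)| * γ := by
          rw [← abs_of_pos hγpos, ← abs_mul]
          rw [abs_of_pos hγpos]
          congr 1
          ring
        rw [h4] at h2
        exact lt_of_le_of_lt h2 h1
      have h5 : |(j:ℝ) - (j':ℝ)| < 1 := by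
        by_contra h6
        push_neg at h6
        have h7 := mul_le_mul_of_nonneg_right h6 hγpos.le
        rw [one_mul] at h7
        linarith
      have h7 := abs_lt.1 h5
      have h10 : (j:ℕ) < (j':ℕ) + 1 := by
        have h8 : ((j:ℕ):ℝ) < ((j':ℕ):ℝ) + 1 := by linarith [h7.2]
        exact_mod_cast h8
      have h11 : (j':ℕ) < (j:ℕ) + 1 := by
        have h9 : ((j':ℕ):ℝ) < ((j:ℕ):ℝ) + 1 := by linarith [h7.1]
        exact_mod_cast h9
      exact Fin.ext (by omega)
    have hcard : D + 1 ≤ T.card := by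
      have h1 := Finset.card_le_card_of_injOn (s := Finset.univ) gb (fun j _ => hgbT j) hinj.injOn
      simpa using h1
    omega
  obtain ⟨j, hj⟩ := hgood
  set z : ℂ := zj j with hzdef
  have hzA : z ∈ A := hzjA j
  have hzball : z ∈ ball (0:ℂ) ρ := hA hzA
  have hprodlow : (γ/2) ^ D ≤ ∏ b ∈ T, ‖z - b‖ ^ m b := by
    have hγ2 : (0:ℝ) ≤ γ/2 := by linarith
    have hγ3 : γ/2 ≤ 1 := by linarith
    calc (γ/2) ^ D ≤ (γ/2) ^ M := pow_le_pow_of_le_one hγ2 hγ3 hMD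
      _ = ∏ b ∈ T, (γ/2) ^ m b := by rw [hMdef, Finset.prod_pow_eq_pow_sum]
      _ ≤ ∏ b ∈ T, ‖z - b‖ ^ m b := by
          apply Finset.prod_le_prod (fun b _ => by positivity)
          intro b hb
          apply pow_le_pow_left₀ hγ2
          rw [← dist_eq_norm]
          exact hj b hb
  have hFz : (1 - ρ)/2 * (γ/2) ^ D / 2 ^ M ≤ ‖F z‖ := by
    have h1 : (1 - ρ)/2 * (γ/2) ^ D / 2 ^ M
        ≤ (1 - ρ)/2 * (∏ b ∈ T, ‖z - b‖ ^ m b) / 2 ^ M := by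
      gcongr
    exact le_trans h1 (hlow z hzball)
  have hPbd : Bornology.IsBounded (P '' A) := by
    apply isBounded_ball.subset
    intro w hw
    obtain ⟨x, hx, rfl⟩ := hw
    exact hmaps (hball (hA hx))
  have hdiamP : ‖F z‖ ≤ diam (P '' A) := by
    have h1 : dist (P z) (P z0) ≤ diam (P '' A) :=
      dist_le_diam_of_mem hPbd (mem_image_of_mem P hzA) (mem_image_of_mem P hz0A)
    rwa [dist_eq_norm] at h1
  -- final arithmetic
  set d : ℝ := diam (P '' A) with hddef
  have hd0 : (0:ℝ) ≤ d := diam_nonneg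
  have hkey : (1 - ρ)/2 * (γ/2) ^ D / 2 ^ M ≤ d := le_trans hFz hdiamP
  have h2M : (2:ℝ) ^ M ≤ 2 ^ D := pow_le_pow_right₀ one_le_two hMD
  have hkey2 : (1 - ρ) * (γ/2) ^ D / (2 * 2 ^ D) ≤ d := by
    have h1 : (1 - ρ) * (γ/2) ^ D / (2 * 2 ^ D) ≤ (1 - ρ)/2 * (γ/2) ^ D / 2 ^ M := by
      rw [div_le_div_iff₀ (by positivity) (by positivity)]
      have hnum : (0:ℝ) ≤ (1 - ρ) * (γ/2) ^ D := by positivity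
      calc (1 - ρ) * (γ/2) ^ D * 2 ^ M ≤ (1 - ρ) * (γ/2) ^ D * 2 ^ D :=
            mul_le_mul_of_nonneg_left h2M hnum
        _ = (1 - ρ)/2 * (γ/2) ^ D * (2 * 2 ^ D) := by ring
    linarith
  have hγhalf : γ/2 = δ / (8 * ((D:ℝ) + 1)) := by
    have hDne' : ((D:ℝ) + 1) ≠ 0 := by positivity
    rw [hγdef, div_div]
    congr 1
    ring
  have hδD : δ ^ D ≤ C ^ D * d := by
    have hQpos : (0:ℝ) < (8 * ((D:ℝ) + 1)) ^ D := by positivity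
    have h2 : (1 - ρ) * (δ ^ D / (8 * ((D:ℝ) + 1)) ^ D) / (2 * 2 ^ D) ≤ d := by
      have h1 : (γ/2) ^ D = δ ^ D / (8 * ((D:ℝ) + 1)) ^ D := by
        rw [hγhalf, div_pow]
      rw [← h1]
      exact hkey2
    have h3 : (1 - ρ) * δ ^ D ≤ d * (2 * 2 ^ D) * (8 * ((D:ℝ) + 1)) ^ D := by
      rw [div_le_iff₀ (by positivity)] at h2
      have h3' := mul_le_mul_of_nonneg_right h2 hQpos.le
      rw [mul_assoc, div_mul_cancel₀ _ hQpos.ne'] at h3'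
      exact h3'
    have e1 : (2:ℝ) ^ D * (8 * ((D:ℝ) + 1)) ^ D = (16 * ((D:ℝ) + 1)) ^ D := by
      rw [← mul_pow]
      congr 1
      ring
    have e2 : (2:ℝ) ^ D * (16 * ((D:ℝ) + 1)) ^ D = (32 * ((D:ℝ) + 1)) ^ D := by
      rw [← mul_pow]
      congr 1
      ring
    have h8' : (2:ℝ) ≤ 2 ^ D := by
      calc (2:ℝ) = 2 ^ 1 := (pow_one 2).symm
        _ ≤ 2 ^ D := pow_le_pow_right₀ one_le_two hD
    have h5 : (2:ℝ) * 2 ^ D * (8 * ((D:ℝ) + 1)) ^ D ≤ (32 * ((D:ℝ) + 1)) ^ D := by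
      calc (2:ℝ) * 2 ^ D * (8 * ((D:ℝ) + 1)) ^ D
          = 2 * (16 * ((D:ℝ) + 1)) ^ D := by rw [mul_assoc, e1]
        _ ≤ 2 ^ D * (16 * ((D:ℝ) + 1)) ^ D :=
            mul_le_mul_of_nonneg_right h8' (by positivity)
        _ = (32 * ((D:ℝ) + 1)) ^ D := e2
    have h6 : ((1:ℝ) - ρ) ^ D ≤ 1 - ρ := pow_le_of_le_one h1ρ.le (by linarith) (by omega)
    have hCD : (32 * ((D:ℝ) + 1)) ^ D / (1 - ρ) ≤ C ^ D := by
      rw [hCdef, div_pow]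
      apply div_le_div_of_nonneg_left (by positivity) (by positivity) h6
    have h7 : δ ^ D ≤ d * ((32 * ((D:ℝ) + 1)) ^ D / (1 - ρ)) := by
      rw [← mul_div_assoc]
      rw [le_div_iff₀ h1ρ]
      calc δ ^ D * (1 - ρ) = (1 - ρ) * δ ^ D := by ring
        _ ≤ d * (2 * 2 ^ D) * (8 * ((D:ℝ) + 1)) ^ D := h3
        _ = d * (2 * 2 ^ D * (8 * ((D:ℝ) + 1)) ^ D) := by ring
        _ ≤ d * (32 * ((D:ℝ) + 1)) ^ D := mul_le_mul_of_nonneg_left h5 hd0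
    calc δ ^ D ≤ d * ((32 * ((D:ℝ) + 1)) ^ D / (1 - ρ)) := h7
      _ ≤ d * C ^ D := mul_le_mul_of_nonneg_left hCD hd0
      _ = C ^ D * d := by ring
  have hDne : ((D:ℝ)) ≠ 0 := (Nat.cast_pos.2 hD).ne'
  have hδnn : (0:ℝ) ≤ δ := hδ0.le
  calc δ = (δ ^ D) ^ ((D:ℝ)⁻¹) := by
        rw [← Real.rpow_natCast δ D, ← Real.rpow_mul hδnn, mul_inv_cancel₀ hDne,
          Real.rpow_one]
    _ ≤ (C ^ D * d) ^ ((D:ℝ)⁻¹) :=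
        Real.rpow_le_rpow (pow_nonneg hδnn _) hδD (by positivity)
    _ = (C ^ D) ^ ((D:ℝ)⁻¹) * d ^ ((D:ℝ)⁻¹) :=
        Real.mul_rpow (pow_nonneg hCpos.le _) hd0
    _ = C * d ^ ((D:ℝ)⁻¹) := by
        rw [← Real.rpow_natCast C D, ← Real.rpow_mul hCpos.le, mul_inv_cancel₀ hDne,
          Real.rpow_one]
end
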